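/- Let ξ ∈ ℝ^d be nonzero, B a symmetric d×d matrix, ψ(v) = ⟨ξ,v⟩ + vᵀBv, and ζ = 4‖B‖/|ξ|. Suppose 0 < ε < min(1, ζ⁻¹) and v maximizes ψ over the closed ball B̄(0,ε). Then |ψ(v) − ε|ξ| − D| ≤ 16‖B‖²ε³/|ξ|, where D = wᵀBw with w = ε|ξ|⁻¹ξ (i.e., D = ε²ξᵀBξ/|ξ|² is half the second derivative of ψ in the direction ξ times ε²). -/

import Mathlib

open scoped RealInnerProductSpace

lemma stmt1_key {d : ℕ} (B : Matrix (Fin d) (Fin d) ℝ) (x y : EuclideanSpace ℝ (Fin d)) :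
    ⟪x, Matrix.toEuclideanCLM (𝕜 := ℝ) B y⟫ = ∑ i, ∑ j, x i * B i j * y j := by
  have h : ∀ i, (Matrix.toEuclideanCLM (𝕜 := ℝ) B y) i = ∑ j, B i j * y j := by
    intro i
    have := Matrix.ofLp_toEuclideanCLM (𝕜 := ℝ) B y
    have h2 := congrFun this i
    simpa [Matrix.mulVec, dotProduct] using h2
  simp [PiLp.inner_apply, h, Finset.mul_sum]
  ring_nf
  simp only [Finset.sum_mul]
  refine Finset.sum_congr rfl fun i _ => Finset.sum_congr rfl fun j _ => by ring

/-- value of `ψ` at its maximizer over `B̄(0,ε)`: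
`|ψ(v) − ε|ξ| − wᵀBw| ≤ 16‖B‖²ε³/|ξ|` where `w = ε|ξ|⁻¹ξ`. -/
theorem stmt1 {d : ℕ} (B : Matrix (Fin d) (Fin d) ℝ) (hB : B.IsSymm)
    (ξ : EuclideanSpace ℝ (Fin d)) (hξ : ξ ≠ 0)
    (ψ : EuclideanSpace ℝ (Fin d) → ℝ)
    (hψ : ∀ v, ψ v = ⟪ξ, v⟫ + ∑ i, ∑ j, v i * B i j * v j)
    (ζ : ℝ) (hζ : ζ = 4 * ‖Matrix.toEuclideanCLM (𝕜 := ℝ) B‖ / ‖ξ‖)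
    (ε : ℝ) (hε : 0 < ε) (hε1 : ε < 1) (hεζ : ε < ζ⁻¹)
    (v : EuclideanSpace ℝ (Fin d)) (hv : v ∈ Metric.closedBall 0 ε)
    (hmax : IsMaxOn ψ (Metric.closedBall 0 ε) v)
    (w : EuclideanSpace ℝ (Fin d)) (hw : w = (ε / ‖ξ‖) • ξ)
    (D : ℝ) (hD : D = ∑ i, ∑ j, w i * B i j * w j) :
    |ψ v - ε * ‖ξ‖ - D| ≤ 16 * ‖Matrix.toEuclideanCLM (𝕜 := ℝ) B‖ ^ 2 * ε ^ 3 / ‖ξ‖ := by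
  set T := Matrix.toEuclideanCLM (𝕜 := ℝ) B with hT
  set M := ‖T‖ with hM
  have hMnn : 0 ≤ M := norm_nonneg _
  clear_value M
  clear_value T
  have hξpos : 0 < ‖ξ‖ := norm_pos_iff.mpr hξ
  have hψ' : ∀ u, ψ u = ⟪ξ, u⟫ + ⟪u, T u⟫ := by
    intro u; rw [hψ, hT, stmt1_key]
  have hQ : ∀ x y : EuclideanSpace ℝ (Fin d), |⟪x, T y⟫| ≤ M * ‖x‖ * ‖y‖ := by
    intro x y
    calc |⟪x, T y⟫| ≤ ‖x‖ * ‖T y‖ := abs_real_inner_le_norm x (T y)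
      _ ≤ ‖x‖ * (M * ‖y‖) := by
          have := T.le_opNorm y
          rw [← hM] at this
          exact mul_le_mul_of_nonneg_left this (norm_nonneg x)
      _ = M * ‖x‖ * ‖y‖ := by ring
  have hwnorm : ‖w‖ = ε := by
    rw [hw, norm_smul, Real.norm_eq_abs, abs_of_pos (div_pos hε hξpos)]
    field_simp
  have hvnorm : ‖v‖ ≤ ε := by
    simpa [Metric.mem_closedBall, dist_zero_right] using hv
  have hwmem : w ∈ Metric.closedBall (0 : EuclideanSpace ℝ (Fin d)) ε := by
    simp [Metric.mem_closedBall, dist_zero_right, hwnorm]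
  have hinnerw : ⟪ξ, w⟫ = ε * ‖ξ‖ := by
    rw [hw, real_inner_smul_right, real_inner_self_eq_norm_sq]
    field_simp
  have hDQ : D = ⟪w, T w⟫ := by rw [hD, hT, stmt1_key]
  have hψw : ψ w = ε * ‖ξ‖ + D := by rw [hψ' w, hinnerw, hDQ]
  have hmaxw : ψ w ≤ ψ v := hmax hwmem
  have hψv : ψ v = ⟪ξ, v⟫ + ⟪v, T v⟫ := hψ' v
  set Qv := ⟪v, T v⟫ with hQv
  clear_value Qv
  set Qw := ⟪w, T w⟫ with hQw
  clear_value Qw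
  have hinner_v : ⟪ξ, v⟫ ≤ ε * ‖ξ‖ := by
    calc ⟪ξ, v⟫ ≤ ‖ξ‖ * ‖v‖ := real_inner_le_norm ξ v
      _ ≤ ‖ξ‖ * ε := mul_le_mul_of_nonneg_left hvnorm (le_of_lt hξpos)
      _ = ε * ‖ξ‖ := by ring
  have hgap : ε * ‖ξ‖ - ⟪ξ, v⟫ ≤ Qv - Qw := by
    have := hmaxw
    rw [hψw, hψv] at this
    rw [hDQ] at this
    linarith
  have hsplit : Qv - Qw = ⟪v - w, T v⟫ + ⟪w, T (v - w)⟫ := by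
    rw [hQv, hQw, inner_sub_left, map_sub, inner_sub_right]; ring
  have hQvw : |Qv - Qw| ≤ 2 * M * ε * ‖v - w‖ := by
    rw [hsplit]
    have h1 := hQ (v - w) v
    have h2 := hQ w (v - w)
    have h3 : M * ‖v - w‖ * ‖v‖ ≤ M * ε * ‖v - w‖ := by
      nlinarith [mul_nonneg (mul_nonneg hMnn (norm_nonneg (v - w))) (sub_nonneg.mpr hvnorm)]
    have h4 : M * ‖w‖ * ‖v - w‖ = M * ε * ‖v - w‖ := by rw [hwnorm]
    calc |⟪v - w, T v⟫ + ⟪w, T (v - w)⟫| ≤ |⟪v - w, T v⟫| + |⟪w, T (v - w)⟫| := abs_add_le _ _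
      _ ≤ M * ε * ‖v - w‖ + M * ε * ‖v - w‖ := by
          refine add_le_add (h1.trans h3) ?_
          rw [← h4]; exact h2
      _ = 2 * M * ε * ‖v - w‖ := by ring
  have hvw : ⟪v, w⟫ = (ε / ‖ξ‖) * ⟪ξ, v⟫ := by
    rw [hw, real_inner_smul_right, real_inner_comm]
  have hdist2 : ‖v - w‖ ^ 2 ≤ (2 * ε / ‖ξ‖) * (ε * ‖ξ‖ - ⟪ξ, v⟫) := by
    have hns : ‖v - w‖ ^ 2 = ‖v‖ ^ 2 - 2 * ⟪v, w⟫ + ‖w‖ ^ 2 := by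
      have := @norm_sub_sq_real (EuclideanSpace ℝ (Fin d)) _ _ v w
      linarith
    rw [hns, hvw, hwnorm]
    have h5 : ‖v‖ ^ 2 ≤ ε ^ 2 := by nlinarith [norm_nonneg v]
    have h6 : (2 * ε / ‖ξ‖) * (ε * ‖ξ‖ - ⟪ξ, v⟫)
        = 2 * ε ^ 2 - 2 * (ε / ‖ξ‖) * ⟪ξ, v⟫ := by field_simp
    rw [h6]; linarith
  have hchain : ‖v - w‖ ^ 2 ≤ (4 * M * ε ^ 2 / ‖ξ‖) * ‖v - w‖ := by
    have h7 : Qv - Qw ≤ 2 * M * ε * ‖v - w‖ := le_trans (le_abs_self _) hQvw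
    have h8 : ε * ‖ξ‖ - ⟪ξ, v⟫ ≤ 2 * M * ε * ‖v - w‖ := le_trans hgap h7
    have h9 : (0:ℝ) ≤ 2 * ε / ‖ξ‖ := by positivity
    calc ‖v - w‖ ^ 2 ≤ (2 * ε / ‖ξ‖) * (ε * ‖ξ‖ - ⟪ξ, v⟫) := hdist2
      _ ≤ (2 * ε / ‖ξ‖) * (2 * M * ε * ‖v - w‖) := mul_le_mul_of_nonneg_left h8 h9
      _ = (4 * M * ε ^ 2 / ‖ξ‖) * ‖v - w‖ := by field_simp; ring
  have hdist : ‖v - w‖ ≤ 4 * M * ε ^ 2 / ‖ξ‖ := by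
    rcases eq_or_lt_of_le (norm_nonneg (v - w)) with h | h
    · rw [← h]; positivity
    · rw [pow_two] at hchain
      exact le_of_mul_le_mul_right hchain h
  have hupper : ψ v - ε * ‖ξ‖ - D ≤ 8 * M ^ 2 * ε ^ 3 / ‖ξ‖ := by
    have h10 : ψ v - ε * ‖ξ‖ - D ≤ Qv - Qw := by
      rw [hψv, hDQ]; linarith
    have h11 : Qv - Qw ≤ 2 * M * ε * (4 * M * ε ^ 2 / ‖ξ‖) := by
      have h7 : Qv - Qw ≤ 2 * M * ε * ‖v - w‖ := le_trans (le_abs_self _) hQvw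
      have : 2 * M * ε * ‖v - w‖ ≤ 2 * M * ε * (4 * M * ε ^ 2 / ‖ξ‖) := by
        apply mul_le_mul_of_nonneg_left hdist (by positivity)
      linarith
    have : 2 * M * ε * (4 * M * ε ^ 2 / ‖ξ‖) = 8 * M ^ 2 * ε ^ 3 / ‖ξ‖ := by
      field_simp; ring
    linarith
  have hlower : 0 ≤ ψ v - ε * ‖ξ‖ - D := by
    linarith [hmaxw, hψw]
  rw [abs_of_nonneg hlower]
  have : (8:ℝ) * M ^ 2 * ε ^ 3 / ‖ξ‖ ≤ 16 * M ^ 2 * ε ^ 3 / ‖ξ‖ := by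
    have h0 : (0:ℝ) ≤ M ^ 2 * ε ^ 3 / ‖ξ‖ := by positivity
    have h1 : 16 * M ^ 2 * ε ^ 3 / ‖ξ‖ - 8 * M ^ 2 * ε ^ 3 / ‖ξ‖ = 8 * (M ^ 2 * ε ^ 3 / ‖ξ‖) := by
      ring
    linarith only [h0, h1]
  linarith only [hupper, this]
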